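/- Let γ₁, γ₂, h₁, h₂ > 0, d ≥ 2, and suppose γ₂/γ₁ = (h₂/h₁)^d. Then the density g_c(r) = γ₂h₂²/(r²+h₂²)^{d/2+1} − γ₁h₁²/(r²+h₁²)^{d/2+1} vanishes at r = 0 and is strictly positive for all r > 0 (when h₁ < h₂). -/

import Mathlib

open Real

/-- Transition case `γ₂/γ₁ = (h₂/h₁)^d` with `h₁ < h₂`: the density `g_c`
vanishes at the origin and is strictly positive for `r > 0`. -/
theorem gc_transition_case (d γ₁ γ₂ h₁ h₂ : ℝ) (hd : 2 ≤ d)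
    (hγ₁ : 0 < γ₁) (hγ₂ : 0 < γ₂) (hh₁ : 0 < h₁) (hh₂ : 0 < h₂)
    (hh : h₁ < h₂) (hratio : γ₂ / γ₁ = (h₂ / h₁) ^ d) :
    (γ₂ * h₂ ^ 2 / ((0 : ℝ) ^ 2 + h₂ ^ 2) ^ (d / 2 + 1)
      - γ₁ * h₁ ^ 2 / ((0 : ℝ) ^ 2 + h₁ ^ 2) ^ (d / 2 + 1) = 0) ∧
    ∀ r : ℝ, 0 < r →
      0 < γ₂ * h₂ ^ 2 / (r ^ 2 + h₂ ^ 2) ^ (d / 2 + 1)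
        - γ₁ * h₁ ^ 2 / (r ^ 2 + h₁ ^ 2) ^ (d / 2 + 1) := by
  have hγ : γ₂ = γ₁ * (h₂ ^ d / h₁ ^ d) := by
    have h1 : γ₂ = (h₂ / h₁) ^ d * γ₁ := (div_eq_iff hγ₁.ne').mp hratio
    rw [h1, Real.div_rpow hh₂.le hh₁.le]; ring
  set e := d / 2 + 1 with he
  have he0 : 0 < e := by rw [he]; linarith
  have hkey : ∀ h r : ℝ, 0 < h →
      h ^ 2 / (r ^ 2 + h ^ 2) ^ e = (h ^ 2 / (r ^ 2 + h ^ 2)) ^ e / h ^ d := by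
    intro h r hh0
    have hA : (0:ℝ) < r ^ 2 + h ^ 2 := by positivity
    have h2e : ((h:ℝ) ^ 2) ^ e = h ^ d * h ^ 2 := by
      rw [← Real.rpow_natCast h 2, ← Real.rpow_mul hh0.le,
        ← Real.rpow_add hh0]
      congr 1
      push_cast
      rw [he]; ring
    rw [Real.div_rpow (by positivity) hA.le, h2e]
    have hAe : (r ^ 2 + h ^ 2) ^ e ≠ 0 := (Real.rpow_pos_of_pos hA e).ne'
    have hhd : (h:ℝ) ^ d ≠ 0 := (Real.rpow_pos_of_pos hh0 d).ne'
    field_simp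
  constructor
  · rw [mul_div_assoc, mul_div_assoc, hkey h₁ 0 hh₁, hkey h₂ 0 hh₂]
    have b1 : h₁ ^ 2 / ((0:ℝ) ^ 2 + h₁ ^ 2) = 1 := by
      rw [show (0:ℝ) ^ 2 + h₁ ^ 2 = h₁ ^ 2 by ring, div_self (by positivity)]
    have b2 : h₂ ^ 2 / ((0:ℝ) ^ 2 + h₂ ^ 2) = 1 := by
      rw [show (0:ℝ) ^ 2 + h₂ ^ 2 = h₂ ^ 2 by ring, div_self (by positivity)]
    have hhd₁ : (0:ℝ) < h₁ ^ d := Real.rpow_pos_of_pos hh₁ d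
    have hhd₂ : (0:ℝ) < h₂ ^ d := Real.rpow_pos_of_pos hh₂ d
    rw [b1, b2, Real.one_rpow, hγ]
    field_simp
    ring
  · intro r hr
    rw [mul_div_assoc, mul_div_assoc, hkey h₁ r hh₁, hkey h₂ r hh₂, hγ]
    have hA₁ : (0:ℝ) < r ^ 2 + h₁ ^ 2 := by positivity
    have hA₂ : (0:ℝ) < r ^ 2 + h₂ ^ 2 := by positivity
    have hb : h₁ ^ 2 / (r ^ 2 + h₁ ^ 2) < h₂ ^ 2 / (r ^ 2 + h₂ ^ 2) := by
      rw [div_lt_div_iff₀ hA₁ hA₂]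
      nlinarith [mul_pos (mul_pos (sub_pos.mpr hh)
        (by positivity : (0:ℝ) < h₂ + h₁)) (mul_pos hr hr)]
    have hrp : (h₁ ^ 2 / (r ^ 2 + h₁ ^ 2)) ^ e < (h₂ ^ 2 / (r ^ 2 + h₂ ^ 2)) ^ e :=
      Real.rpow_lt_rpow (by positivity) hb he0
    have hhd₁ : (0:ℝ) < h₁ ^ d := Real.rpow_pos_of_pos hh₁ d
    have hhd₂ : (0:ℝ) < h₂ ^ d := Real.rpow_pos_of_pos hh₂ d
    rw [sub_pos]
    have e2 : γ₁ * (h₂ ^ d / h₁ ^ d) * ((h₂ ^ 2 / (r ^ 2 + h₂ ^ 2)) ^ e / h₂ ^ d)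
        = γ₁ / h₁ ^ d * (h₂ ^ 2 / (r ^ 2 + h₂ ^ 2)) ^ e := by
      field_simp
    have e1 : γ₁ * ((h₁ ^ 2 / (r ^ 2 + h₁ ^ 2)) ^ e / h₁ ^ d)
        = γ₁ / h₁ ^ d * (h₁ ^ 2 / (r ^ 2 + h₁ ^ 2)) ^ e := by ring
    rw [e2, e1]
    exact mul_lt_mul_of_pos_left hrp (by positivity)
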